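/- arXiv:1805.05626 — 3 statements merged into one kernel-verified Lean document; each statement's English description precedes it below -/
import Mathlib

section
/- The maximum over all minimal Besicovitch arrangements B in 𝔽_q² of the number x_1^B of points of multiplicity 1 equals q² − 1; that is, x_1^B ≤ q² − 1 for every such B, and this bound is attained (for instance by the arrangement of all q+1 lines through the origin). -/
open Finset

/-- `memLine s c P` says that the point `P ∈ 𝔽_q²` lies on the line `l(s, c)`:
for `s = some m` (slope `m ∈ 𝔽_q`) this is the line `y = m·x + c`,
and for `s = none` (slope `∞`) this is the vertical line `x = c`. -/
def memLine {F : Type*} [Field F] (s : Option F) (c : F) (P : F × F) : Prop :=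
  match s with
  | none => P.1 = c
  | some m => P.2 = m * P.1 + c

instance {F : Type*} [Field F] [DecidableEq F] :
    ∀ (s : Option F) (c : F) (P : F × F), Decidable (memLine s c P)
  | none, c, P => inferInstanceAs (Decidable (P.1 = c))
  | some m, c, P => inferInstanceAs (Decidable (P.2 = m * P.1 + c))

/-- The multiplicity of the point `P` in the minimal Besicovitch arrangement
`B = ⋃_{i ∈ 𝔽_q ∪ {∞}} l(i, b i)` determined by `b : 𝔽_q ∪ {∞} → 𝔽_q`,
i.e. the number of slopes `i` with `P ∈ l(i, b i)`. -/
def multPt {F : Type*} [Field F] [Fintype F] [DecidableEq F]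
    (b : Option F → F) (P : F × F) : ℕ :=
  (Finset.univ.filter fun i : Option F => memLine i (b i) P).card

/-- `xCount b m` is `x_m^B`: the number of points of `𝔽_q²` of multiplicity
exactly `m` in the minimal Besicovitch arrangement determined by `b`. -/
def xCount {F : Type*} [Field F] [Fintype F] [DecidableEq F]
    (b : Option F → F) (m : ℕ) : ℕ :=
  (Finset.univ.filter fun P : F × F => multPt b P = m).card

lemma card_line {F : Type*} [Field F] [Fintype F] [DecidableEq F] (s : Option F) (c : F) :
    (univ.filter fun P : F × F => memLine s c P).card = Fintype.card F := by
  rw [← Fintype.card_subtype]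
  cases s with
  | none =>
    exact Fintype.card_congr ⟨fun P => P.1.2, fun y => ⟨(c, y), rfl⟩,
      fun ⟨⟨x,y⟩, h⟩ => by simp only [memLine] at h; simp [h], fun y => rfl⟩
  | some m =>
    exact Fintype.card_congr ⟨fun P => P.1.1, fun x => ⟨(x, m*x+c), rfl⟩,
      fun ⟨⟨x,y⟩, h⟩ => by simp only [memLine] at h; simp [h], fun x => rfl⟩

lemma sum_mult {F : Type*} [Field F] [Fintype F] [DecidableEq F] (b : Option F → F) :
    ∑ P : F × F, multPt b P = (Fintype.card F + 1) * Fintype.card F := by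
  unfold multPt
  simp only [Finset.card_filter]
  rw [Finset.sum_comm]
  have : ∀ i : Option F, (∑ P : F × F, if memLine i (b i) P then 1 else 0) = Fintype.card F := by
    intro i
    rw [← Finset.card_filter]
    exact card_line i (b i)
  rw [Finset.sum_congr rfl fun i _ => this i]
  simp [Fintype.card_option, mul_comm]

/-- The maximum of `x_1^B` over all minimal Besicovitch arrangements `B` in `𝔽_q²` is `q² − 1`:
`x_1^B ≤ q² − 1` for every such `B`, and the bound is attained, for instance by the
arrangement of all `q+1` lines through the origin. -/
theorem stmt9 {F : Type*} [Field F] [Fintype F] [DecidableEq F]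
    (q : ℕ) (hq : Fintype.card F = q) :
    (∀ b : Option F → F, xCount b 1 ≤ q ^ 2 - 1) ∧
      xCount (fun _ : Option F => (0 : F)) 1 = q ^ 2 - 1 := by
  have hq1 : 1 ≤ q := hq ▸ Fintype.card_pos
  have hcardP : Fintype.card (F × F) = q ^ 2 := by
    rw [Fintype.card_prod, hq, sq]
  constructor
  · intro b
    by_contra h
    push_neg at h
    have hle : xCount b 1 ≤ q ^ 2 := by
      rw [← hcardP]
      exact (Finset.card_filter_le _ _).trans_eq (Finset.card_univ)
    have heq : xCount b 1 = q ^ 2 := by omega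
    have huniv : (univ.filter fun P : F × F => multPt b P = 1) = univ := by
      apply Finset.eq_univ_of_card
      rw [hcardP, ← heq]
      rfl
    have hall : ∀ P : F × F, multPt b P = 1 := by
      intro P
      have := Finset.mem_filter.mp (huniv ▸ Finset.mem_univ P)
      exact this.2
    have hsum := sum_mult b
    rw [Finset.sum_congr rfl fun P _ => hall P] at hsum
    simp only [Finset.sum_const, Finset.card_univ, hcardP, smul_eq_mul, mul_one, hq] at hsum
    nlinarith
  · have key : ∀ P : F × F, multPt (fun _ => (0:F)) P = 1 ↔ P ≠ (0,0) := by
      intro P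
      constructor
      · intro h hP
        subst hP
        unfold multPt at h
        have : (univ.filter fun i : Option F => memLine i 0 ((0,0) : F × F)) = univ := by
          apply Finset.filter_true_of_mem
          intro i _
          cases i <;> simp [memLine]
        rw [this, Finset.card_univ, Fintype.card_option, hq] at h
        omega
      · intro hP
        unfold multPt
        by_cases hx : P.1 = 0
        · have hy : P.2 ≠ 0 := fun hy => hP (Prod.ext hx hy)
          have : (univ.filter fun i : Option F => memLine i 0 P) = {none} := by
            ext i
            cases i <;> simp only [Finset.mem_filter, Finset.mem_univ, true_and, Finset.mem_singleton] <;> simp [memLine, hx, hy]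
          rw [this]; rfl
        · have : (univ.filter fun i : Option F => memLine i 0 P) = {some (P.2 * P.1⁻¹)} := by
            ext i
            cases i with
            | none => simp only [Finset.mem_filter, Finset.mem_univ, true_and, Finset.mem_singleton] <;> simp [memLine, hx]
            | some m =>
              simp only [Finset.mem_filter, Finset.mem_univ, true_and, Finset.mem_singleton]
              simp only [memLine, add_zero, Option.some.injEq]
              constructor
              · intro h; rw [h]; field_simp
              · intro h; rw [h]; field_simp
          rw [this]; rfl
    unfold xCount
    have : (univ.filter fun P : F × F => multPt (fun _ => (0:F)) P = 1)
        = univ.filter fun P : F × F => P ≠ (0,0) := by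
      apply Finset.filter_congr
      intro P _
      simpa using key P
    rw [this, Finset.filter_ne', Finset.card_erase_of_mem (Finset.mem_univ _),
      Finset.card_univ, hcardP]
end

section
/- For every minimal Besicovitch arrangement B in 𝔽_q², one has 3·x_0^B − x_2^B ≤ q² − 2q (equivalently, 3·x_0^B ≤ q² − 2q + x_2^B). -/
open Finset

section Aux
variable {F : Type*} [Field F] [Fintype F] [DecidableEq F]

/-- Every line has exactly `q` points. -/
lemma besi_lineCard (s : Option F) (c : F) :
    (univ.filter fun P : F × F => memLine s c P).card = Fintype.card F := by
  cases s with
  | none =>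
    have h : (univ.filter fun P : F × F => memLine none c P)
        = univ.image (fun y : F => (c, y)) := by
      ext ⟨x, y⟩
      simp [memLine, eq_comm]
    rw [h, Finset.card_image_of_injective _ (fun a b hab => by simpa using hab),
      Finset.card_univ]
  | some m =>
    have h : (univ.filter fun P : F × F => memLine (some m) c P)
        = univ.image (fun x : F => (x, m * x + c)) := by
      ext ⟨x, y⟩
      constructor
      · intro hx
        rw [mem_filter] at hx
        simp only [memLine, mem_filter] at hx
        exact Finset.mem_image.mpr ⟨x, Finset.mem_univ x, by simp [hx.2]⟩
      · intro hx
        obtain ⟨a, _, ha⟩ := Finset.mem_image.mp hx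
        obtain ⟨h1, h2⟩ := Prod.mk.injEq .. ▸ ha
        subst h1
        rw [mem_filter]
        simp only [memLine, mem_filter, mem_univ, true_and]
        exact h2.symm
    rw [h, Finset.card_image_of_injective _
      (fun a b hab => by simpa using congrArg Prod.fst hab), Finset.card_univ]

/-- Two lines with distinct slopes meet in exactly one point. -/
lemma besi_interCard (s t : Option F) (hst : s ≠ t) (c d : F) :
    (univ.filter fun P : F × F => memLine s c P ∧ memLine t d P).card = 1 := by
  rw [Finset.card_eq_one]
  match s, t with
  | none, none => exact absurd rfl hst
  | none, some m =>
    refine ⟨(c, m * c + d), ?_⟩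
    ext ⟨x, y⟩
    rw [mem_filter]
    simp only [memLine, mem_filter, mem_univ, true_and, Finset.mem_singleton,
      Prod.mk.injEq]
    constructor
    · rintro ⟨rfl, rfl⟩; exact ⟨rfl, rfl⟩
    · rintro ⟨rfl, rfl⟩; exact ⟨rfl, rfl⟩
  | some m, none =>
    refine ⟨(d, m * d + c), ?_⟩
    ext ⟨x, y⟩
    rw [mem_filter]
    simp only [memLine, mem_filter, mem_univ, true_and, Finset.mem_singleton,
      Prod.mk.injEq]
    constructor
    · rintro ⟨rfl, rfl⟩; exact ⟨rfl, rfl⟩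
    · rintro ⟨rfl, rfl⟩; exact ⟨rfl, rfl⟩
  | some m1, some m2 =>
    have hm : m1 - m2 ≠ 0 := sub_ne_zero.mpr (fun h => hst (by rw [h]))
    set x0 : F := (d - c) / (m1 - m2) with hx0
    refine ⟨(x0, m1 * x0 + c), ?_⟩
    ext ⟨x, y⟩
    rw [mem_filter]
    simp only [memLine, mem_filter, mem_univ, true_and, Finset.mem_singleton,
      Prod.mk.injEq]
    constructor
    · rintro ⟨rfl, h2⟩
      have hx : x = x0 := by
        rw [hx0]
        field_simp
        linear_combination h2
      exact ⟨hx, by rw [hx]⟩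
    · rintro ⟨rfl, rfl⟩
      refine ⟨rfl, ?_⟩
      rw [hx0]
      field_simp
      ring

/-- Total incidence count: `∑_P mult(P) = q(q+1)`. -/
lemma besi_sum_mult (b : Option F → F) :
    ∑ P : F × F, (multPt b P : ℤ) = (Fintype.card F + 1) * Fintype.card F := by
  have h1 : ∀ P : F × F, (multPt b P : ℤ)
      = ∑ i : Option F, (if memLine i (b i) P then (1:ℤ) else 0) := by
    intro P; rw [multPt, Finset.card_filter]; push_cast; simp
  simp_rw [h1]
  rw [Finset.sum_comm]
  have h2 : ∀ i : Option F, ∑ P : F × F, (if memLine i (b i) P then (1:ℤ) else 0)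
      = (Fintype.card F : ℤ) := by
    intro i; rw [Finset.sum_boole, besi_lineCard i (b i)]
  simp_rw [h2]
  simp [Fintype.card_option]

/-- Second moment: `∑_P mult(P)² = 2q(q+1)`. -/
lemma besi_sum_mult_sq (b : Option F → F) :
    ∑ P : F × F, (multPt b P : ℤ)^2
      = 2 * ((Fintype.card F + 1) * Fintype.card F) := by
  have h1 : ∀ P : F × F, (multPt b P : ℤ)^2
      = ∑ i : Option F, ∑ j : Option F,
          (if memLine i (b i) P ∧ memLine j (b j) P then (1:ℤ) else 0) := by
    intro P
    rw [sq, multPt, Finset.card_filter]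
    push_cast
    rw [Finset.sum_mul_sum]
    apply Finset.sum_congr rfl; intro i _
    apply Finset.sum_congr rfl; intro j _
    split_ifs with h h2 h3 <;> simp_all
  simp_rw [h1]
  rw [Finset.sum_comm]
  have h2 : ∀ i : Option F, ∑ P : F × F, ∑ j : Option F,
      (if memLine i (b i) P ∧ memLine j (b j) P then (1:ℤ) else 0)
      = 2 * Fintype.card F := by
    intro i
    rw [Finset.sum_comm]
    have h3 : ∀ j : Option F, ∑ P : F × F,
        (if memLine i (b i) P ∧ memLine j (b j) P then (1:ℤ) else 0)
        = if i = j then (Fintype.card F : ℤ) else 1 := by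
      intro j
      rw [Finset.sum_boole]
      by_cases hij : i = j
      · subst hij
        simp only [if_pos rfl]
        rw [← besi_lineCard i (b i)]
        norm_cast
        congr 1
        apply Finset.filter_congr
        intro P _; simp
      · rw [if_neg hij, besi_interCard i j hij (b i) (b j)]
        norm_num
    simp_rw [h3]
    have h4 : ∀ j : Option F, (if i = j then (Fintype.card F : ℤ) else 1)
        = 1 + (if i = j then (Fintype.card F : ℤ) - 1 else 0) := by
      intro j; split_ifs <;> ring
    simp_rw [h4, Finset.sum_add_distrib, Finset.sum_ite_eq]
    simp [Fintype.card_option]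
    ring
  simp_rw [h2]
  simp [Fintype.card_option]
  ring

lemma besi_g_nonneg (m : ℕ) (h : m ≠ 2) : (0:ℤ) ≤ (m:ℤ)^2 - 4*m + 3 := by
  have h1 : m ≤ 1 ∨ 3 ≤ m := by omega
  rcases h1 with h1 | h1
  · interval_cases m <;> norm_num
  · have h3 : (3:ℤ) ≤ (m:ℤ) := by exact_mod_cast h1
    nlinarith

end Aux

/-- For every minimal Besicovitch arrangement `B` in `𝔽_q²`,
`3·x_0^B − x_2^B ≤ q² − 2q`. -/
theorem stmt12 {F : Type*} [Field F] [Fintype F] [DecidableEq F]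
    (q : ℕ) (hq : Fintype.card F = q) (b : Option F → F) :
    3 * (xCount b 0 : ℤ) - xCount b 2 ≤ (q : ℤ) ^ 2 - 2 * q := by
  subst hq
  set q : ℕ := Fintype.card F with hq
  -- the key sum identity: ∑_P (m² - 4m + 3) = q² - 2q
  have key : ∑ P : F × F, ((multPt b P : ℤ)^2 - 4 * multPt b P + 3)
      = (q : ℤ)^2 - 2*q := by
    rw [Finset.sum_add_distrib, Finset.sum_sub_distrib, besi_sum_mult_sq b,
      ← Finset.mul_sum, besi_sum_mult b, Finset.sum_const, Finset.card_univ,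
      Fintype.card_prod]
    push_cast
    ring
  -- lower bound the sum by the contribution from multiplicity-0 and -2 points
  set A : Finset (F × F) := univ.filter fun P => multPt b P = 0 with hA
  set B2 : Finset (F × F) := univ.filter fun P => multPt b P = 2 with hB2
  have hdisj : Disjoint A B2 := by
    rw [hA, hB2, Finset.disjoint_left]
    intro P hP hP2
    simp only [Finset.mem_filter] at hP hP2
    omega
  have hsub : A ∪ B2 ⊆ univ := Finset.subset_univ _
  have hineq : ∑ P ∈ A ∪ B2, ((multPt b P : ℤ)^2 - 4 * multPt b P + 3)
      ≤ ∑ P : F × F, ((multPt b P : ℤ)^2 - 4 * multPt b P + 3) := by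
    apply Finset.sum_le_sum_of_subset_of_nonneg hsub
    intro P _ hP
    have hP2 : multPt b P ≠ 2 := by
      intro h
      exact hP (Finset.mem_union_right _ (by simp [hB2, h]))
    exact besi_g_nonneg _ hP2
  have hsplit : ∑ P ∈ A ∪ B2, ((multPt b P : ℤ)^2 - 4 * multPt b P + 3)
      = 3 * (xCount b 0 : ℤ) - xCount b 2 := by
    rw [Finset.sum_union hdisj]
    have hAsum : ∑ P ∈ A, ((multPt b P : ℤ)^2 - 4 * multPt b P + 3)
        = 3 * (xCount b 0 : ℤ) := by
      rw [Finset.sum_congr rfl (g := fun _ => (3:ℤ)) (fun P hP => by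
        simp only [hA, Finset.mem_filter] at hP
        rw [hP.2]; norm_num)]
      rw [Finset.sum_const, xCount]
      push_cast [hA]
      ring
    have hBsum : ∑ P ∈ B2, ((multPt b P : ℤ)^2 - 4 * multPt b P + 3)
        = -(xCount b 2 : ℤ) := by
      rw [Finset.sum_congr rfl (g := fun _ => (-1:ℤ)) (fun P hP => by
        simp only [hB2, Finset.mem_filter] at hP
        rw [hP.2]; norm_num)]
      rw [Finset.sum_const, xCount]
      push_cast [hB2]
      ring
    rw [hAsum, hBsum]
    ring
  calc 3 * (xCount b 0 : ℤ) - xCount b 2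
      = ∑ P ∈ A ∪ B2, ((multPt b P : ℤ)^2 - 4 * multPt b P + 3) := hsplit.symm
    _ ≤ ∑ P : F × F, ((multPt b P : ℤ)^2 - 4 * multPt b P + 3) := hineq
    _ = (q : ℤ)^2 - 2*q := key
end

section
/- Let q be an even prime power and let B_1 be the minimal Besicovitch arrangement in 𝔽_q² consisting of the lines l(i, −i²) for i ∈ 𝔽_q together with l(∞, 0). Then x_0^{B_1} = q(q−1)/2, x_1^{B_1} = 0, x_2^{B_1} = q(q+1)/2, and x_m^{B_1} = 0 for every m ∉ {0,2}. -/
open Finset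

section Aux
variable {F : Type*} [Field F] [Fintype F] [DecidableEq F]

lemma multPt_eq (b : Option F → F) (P : F × F) :
    multPt b P = (univ.filter fun s : F => memLine (some s) (b (some s)) P).card
      + (if memLine none (b none) P then 1 else 0) := by
  classical
  simp only [multPt, Finset.card_filter]
  rw [Fintype.sum_option, add_comm]

lemma line_card (i : Option F) (c : F) :
    (univ.filter fun P : F × F => memLine i c P).card = Fintype.card F := by
  classical
  cases i with
  | none =>
    have h : (univ.filter fun P : F × F => memLine none c P)
        = univ.image (fun y : F => ((c, y) : F × F)) := by
      ext P
      simp [memLine, Prod.ext_iff, eq_comm]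
    rw [h, Finset.card_image_of_injective _ (fun a b hab => by
      simpa [Prod.ext_iff] using hab)]
    simp
  | some m =>
    have h : (univ.filter fun P : F × F => memLine (some m) c P)
        = univ.image (fun x : F => ((x, m * x + c) : F × F)) := by
      ext P
      constructor
      · intro hP
        rw [mem_filter] at hP
        simp only [mem_univ, true_and, memLine] at hP
        simp only [mem_image, mem_univ, true_and]
        exact ⟨P.1, by rw [← hP]⟩
      · intro hP
        simp only [mem_image, mem_univ, true_and] at hP
        obtain ⟨x, hx⟩ := hP
        rw [← hx, mem_filter]
        simp only [mem_univ, true_and, memLine]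
    rw [h, Finset.card_image_of_injective _ (fun a b hab => (Prod.ext_iff.mp hab).1)]
    simp

lemma dich (h2 : ∀ a : F, a + a = 0) (P : F × F) :
    multPt (fun i : Option F => i.elim (0 : F) fun s => -(s ^ 2)) P = 0 ∨
    multPt (fun i : Option F => i.elim (0 : F) fun s => -(s ^ 2)) P = 2 := by
  classical
  have two0 : (2 : F) = 0 := by have := h2 1; linear_combination this
  have hneg : ∀ a : F, -a = a := fun a => by linear_combination -(h2 a)
  rw [multPt_eq]
  show (univ.filter fun s : F => P.2 = s * P.1 + -(s ^ 2)).card + (if P.1 = 0 then 1 else 0) = 0 ∨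
    (univ.filter fun s : F => P.2 = s * P.1 + -(s ^ 2)).card + (if P.1 = 0 then 1 else 0) = 2
  by_cases hx : P.1 = 0
  · right
    -- unique s with P.2 = -(s^2)
    have hinj : Function.Injective (fun s : F => -(s ^ 2)) := by
      intro a b hab
      simp only at hab
      have h0 : (a - b) ^ 2 = 0 := by linear_combination -hab + (b^2 - a*b) * two0
      have h1 := pow_eq_zero_iff (n := 2) (by norm_num) |>.mp h0
      exact sub_eq_zero.mp h1
    have hsurj : Function.Surjective (fun s : F => -(s ^ 2)) :=
      Finite.surjective_of_injective hinj
    obtain ⟨s₀, hs₀⟩ := hsurj P.2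
    have hset : (univ.filter fun s : F => P.2 = s * P.1 + -(s ^ 2)) = {s₀} := by
      ext s
      simp only [mem_filter, mem_univ, true_and, mem_singleton, hx, mul_zero, zero_add]
      constructor
      · intro h; exact (hinj (hs₀.trans h)).symm
      · rintro rfl; exact hs₀.symm
    rw [hset, if_pos hx]
    simp
  · rw [if_neg hx]
    by_cases hex : ∃ s : F, P.2 = s * P.1 + -(s ^ 2)
    · right
      obtain ⟨s₁, hs₁⟩ := hex
      have hset : (univ.filter fun s : F => P.2 = s * P.1 + -(s ^ 2)) = {s₁, s₁ + P.1} := by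
        ext s
        simp only [mem_filter, mem_univ, true_and, mem_insert, mem_singleton]
        constructor
        · intro h
          have hz : (s - s₁) * (P.1 - (s + s₁)) = 0 := by
            linear_combination hs₁ - h
          rcases mul_eq_zero.mp hz with h1 | h1
          · left; exact sub_eq_zero.mp h1
          · right
            have : P.1 = s + s₁ := sub_eq_zero.mp h1
            linear_combination -this - s₁ * two0
        · rintro (rfl | rfl)
          · exact hs₁
          · linear_combination hs₁ + (s₁ * P.1) * two0
      rw [hset]
      rw [Finset.card_insert_of_notMem (by
        simp only [mem_singleton]
        intro h
        exact hx (by linear_combination -h))]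
      simp
    · left
      push_neg at hex
      rw [Finset.filter_false_of_mem (fun s _ => hex s)]
      simp

lemma sum_multPt (b : Option F → F) :
    ∑ P : F × F, multPt b P = (Fintype.card F + 1) * Fintype.card F := by
  classical
  simp only [multPt, Finset.card_filter]
  rw [Finset.sum_comm]
  have h : ∀ i : Option F,
      (∑ P : F × F, if memLine i (b i) P then 1 else 0) = Fintype.card F := by
    intro i
    rw [← Finset.card_filter]
    exact line_card i (b i)
  rw [Finset.sum_congr rfl (fun i _ => h i)]
  simp [Fintype.card_option, mul_comm]

theorem stmt16' (q : ℕ) (hq : Fintype.card F = q) (heven : Even q) :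
    xCount (fun i : Option F => i.elim (0 : F) fun s => -(s ^ 2)) 0 = q * (q - 1) / 2 ∧
      xCount (fun i : Option F => i.elim (0 : F) fun s => -(s ^ 2)) 1 = 0 ∧
      xCount (fun i : Option F => i.elim (0 : F) fun s => -(s ^ 2)) 2 = q * (q + 1) / 2 ∧
      ∀ m : ℕ, m ∉ ({0, 2} : Set ℕ) →
        xCount (fun i : Option F => i.elim (0 : F) fun s => -(s ^ 2)) m = 0 := by
  classical
  set b := (fun i : Option F => i.elim (0 : F) fun s => -(s ^ 2)) with hb
  -- characteristic 2
  have h2 : ∀ a : F, a + a = 0 := by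
    obtain ⟨n, hp, hcard⟩ := FiniteField.card F (ringChar F)
    have hpe : ringChar F = 2 := by
      have : Even (ringChar F ^ (n : ℕ)) := by rw [← hcard, hq]; exact heven
      have he : Even (ringChar F) := by
        rcases (Nat.even_pow.mp this) with ⟨h, _⟩; exact h
      exact (Nat.Prime.even_iff hp).mp he
    haveI : CharP F 2 := hpe ▸ ringChar.charP F
    exact fun a => CharTwo.add_self_eq_zero a
  have hd : ∀ P : F × F, multPt b P = 0 ∨ multPt b P = 2 := dich h2
  -- partition
  have hflt : (univ.filter fun P : F × F => ¬ multPt b P = 0)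
      = univ.filter fun P : F × F => multPt b P = 2 :=
    Finset.filter_congr fun P _ => by rcases hd P with h | h <;> simp [h]
  have hpart : xCount b 0 + xCount b 2 = q * q := by
    rw [xCount, xCount, ← hflt,
      Finset.card_filter_add_card_filter_not]
    simp [Fintype.card_prod, hq]
  -- double counting
  have hsum2 : ∑ P : F × F, multPt b P = 2 * xCount b 2 := by
    rw [← Finset.sum_filter_add_sum_filter_not univ (fun P => multPt b P = 2) (multPt b)]
    have hA : ∑ P ∈ univ.filter fun P : F × F => multPt b P = 2, multPt b P
        = 2 * xCount b 2 := by
      rw [Finset.sum_congr rfl (fun P hP => (Finset.mem_filter.mp hP).2)]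
      rw [Finset.sum_const, xCount, smul_eq_mul, mul_comm]
    have hB : ∑ P ∈ univ.filter (fun P : F × F => ¬ multPt b P = 2), multPt b P = 0 := by
      apply Finset.sum_eq_zero
      intro P hP
      rcases hd P with h | h
      · exact h
      · exact absurd h (Finset.mem_filter.mp hP).2
    rw [hA, hB, add_zero]
  have htotal : (q + 1) * q = 2 * xCount b 2 := by
    rw [← hq, ← sum_multPt b, hsum2]
  have hm : ∀ m : ℕ, m ≠ 0 → m ≠ 2 → xCount b m = 0 := by
    intro m hm0 hm2
    rw [xCount, Finset.card_eq_zero, Finset.filter_eq_empty_iff]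
    intro P _
    rcases hd P with h | h <;> omega
  have hfinal : xCount b 0 = q * (q - 1) / 2 ∧ xCount b 2 = q * (q + 1) / 2 := by
    have eb : q * (q + 1) = q * q + q := by ring
    have h1 : q * q + q = 2 * xCount b 2 := by rw [← htotal]; ring
    have ea : q * (q - 1) + q = q * q := by
      cases q with
      | zero => simp
      | succ n => simp only [Nat.add_sub_cancel]; ring
    rw [eb]
    obtain ⟨Q, hQ⟩ : ∃ Q, q * q = Q := ⟨_, rfl⟩
    obtain ⟨A, hA⟩ : ∃ A, q * (q - 1) = A := ⟨_, rfl⟩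
    rw [hQ] at hpart h1 ea
    rw [hA] at ea ⊢
    rw [hQ]
    omega
  refine ⟨hfinal.1, hm 1 one_ne_zero (by norm_num), hfinal.2, ?_⟩
  intro m hmem
  simp only [Set.mem_insert_iff, Set.mem_singleton_iff, not_or] at hmem
  exact hm m hmem.1 hmem.2

end Aux

/-- For `q` an even prime power and `B₁` the minimal Besicovitch arrangement consisting of the
lines `l(i, −i²)` for `i ∈ 𝔽_q` together with `l(∞, 0)`: `x_0^{B₁} = q(q−1)/2`,
`x_1^{B₁} = 0`, `x_2^{B₁} = q(q+1)/2`, and `x_m^{B₁} = 0` for `m ∉ {0,2}`. -/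
theorem stmt16 {F : Type*} [Field F] [Fintype F] [DecidableEq F]
    (q : ℕ) (hq : Fintype.card F = q) (heven : Even q) :
    xCount (fun i : Option F => i.elim (0 : F) fun s => -(s ^ 2)) 0 = q * (q - 1) / 2 ∧
      xCount (fun i : Option F => i.elim (0 : F) fun s => -(s ^ 2)) 1 = 0 ∧
      xCount (fun i : Option F => i.elim (0 : F) fun s => -(s ^ 2)) 2 = q * (q + 1) / 2 ∧
      ∀ m : ℕ, m ∉ ({0, 2} : Set ℕ) →
        xCount (fun i : Option F => i.elim (0 : F) fun s => -(s ^ 2)) m = 0 := by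
  exact stmt16' q hq heven
end
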